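/- For every positive integer n, the real number x₁^{20} = [(178+1812n+7101n²+13455n³+12357n⁴+4401n⁵)·√(3+9n+9n²) − (13+54n+57n²)·√3·√(689+7847n+39387n²+113562n³+205110n⁴+236718n⁵+169641n⁶+68607n⁷+11907n⁸)] / [8·(−131−969n−2835n²−3870n³−1809n⁴+999n⁵+999n⁶)] satisfies (3+6n)/(8√(3+9n+9n²)) < x₁^{20} < (9+18n)/(8√(3+9n+9n²)). -/
import Mathlib

open Real

lemma aux_div_lt_neg {a b c d : ℝ} (hb : 0 < b) (hd : d < 0) (h : c * b < a * d) :
    a / b < c / d := by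
  rw [← neg_div_neg_eq c d, div_lt_div_iff₀ hb (by linarith : 0 < -d)]
  nlinarith

lemma aux_neg_lt_div {a b c d : ℝ} (hb : 0 < b) (hd : d < 0) (h : a * d < c * b) :
    c / d < a / b := by
  rw [← neg_div_neg_eq c d, div_lt_div_iff₀ (by linarith : 0 < -d) hb]
  nlinarith

lemma aux_q_pos (x : ℝ) (hx : 2 ≤ x) : 0 < -131 - 969 * x - 2835 * x ^ 2 - 3870 * x ^ 3 - 1809 * x ^ 4 + 999 * x ^ 5 + 999 * x ^ 6 := by
  have hy : (0:ℝ) ≤ x - 2 := by linarith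
  nlinarith [pow_nonneg hy 2, pow_nonneg hy 3, pow_nonneg hy 4, pow_nonneg hy 5,
    pow_nonneg hy 6, hy]

lemma aux_S1_pos (x : ℝ) (hx0 : 0 ≤ x) :
    0 < (178 + 1812 * x + 7101 * x ^ 2 + 13455 * x ^ 3 + 12357 * x ^ 4 + 4401 * x ^ 5) * (3 + 9 * x + 9 * x ^ 2) - (3 + 6 * x) * (-131 - 969 * x - 2835 * x ^ 2 - 3870 * x ^ 3 - 1809 * x ^ 4 + 999 * x ^ 5 + 999 * x ^ 6) := by
  nlinarith [pow_nonneg hx0 2, pow_nonneg hx0 3, pow_nonneg hx0 4, pow_nonneg hx0 5, pow_nonneg hx0 6, pow_nonneg hx0 7, hx0]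

lemma aux_D1 (x : ℝ) (hx : 2 ≤ x) :
    (13 + 54 * x + 57 * x ^ 2) ^ 2 * (3 * (689 + 7847 * x + 39387 * x ^ 2 + 113562 * x ^ 3 + 205110 * x ^ 4 + 236718 * x ^ 5 + 169641 * x ^ 6 + 68607 * x ^ 7 + 11907 * x ^ 8) * (3 + 9 * x + 9 * x ^ 2)) <
      ((178 + 1812 * x + 7101 * x ^ 2 + 13455 * x ^ 3 + 12357 * x ^ 4 + 4401 * x ^ 5) * (3 + 9 * x + 9 * x ^ 2) - (3 + 6 * x) * (-131 - 969 * x - 2835 * x ^ 2 - 3870 * x ^ 3 - 1809 * x ^ 4 + 999 * x ^ 5 + 999 * x ^ 6)) ^ 2 := by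
  have hy : (0:ℝ) ≤ x - 2 := by linarith
  nlinarith [pow_nonneg hy 2, pow_nonneg hy 3, pow_nonneg hy 4, pow_nonneg hy 5, pow_nonneg hy 6, pow_nonneg hy 7, pow_nonneg hy 8, pow_nonneg hy 9, pow_nonneg hy 10, pow_nonneg hy 11, pow_nonneg hy 12, pow_nonneg hy 13, pow_nonneg hy 14, hy]

lemma aux_D2 (x : ℝ) (hx : 2 ≤ x) :
    ((178 + 1812 * x + 7101 * x ^ 2 + 13455 * x ^ 3 + 12357 * x ^ 4 + 4401 * x ^ 5) * (3 + 9 * x + 9 * x ^ 2) - (9 + 18 * x) * (-131 - 969 * x - 2835 * x ^ 2 - 3870 * x ^ 3 - 1809 * x ^ 4 + 999 * x ^ 5 + 999 * x ^ 6)) ^ 2 <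
      (13 + 54 * x + 57 * x ^ 2) ^ 2 * (3 * (689 + 7847 * x + 39387 * x ^ 2 + 113562 * x ^ 3 + 205110 * x ^ 4 + 236718 * x ^ 5 + 169641 * x ^ 6 + 68607 * x ^ 7 + 11907 * x ^ 8) * (3 + 9 * x + 9 * x ^ 2)) := by
  have hy : (0:ℝ) ≤ x - 2 := by linarith
  nlinarith [pow_nonneg hy 2, pow_nonneg hy 3, pow_nonneg hy 4, pow_nonneg hy 5, pow_nonneg hy 6, pow_nonneg hy 7, pow_nonneg hy 8, pow_nonneg hy 9, pow_nonneg hy 10, pow_nonneg hy 11, pow_nonneg hy 12, pow_nonneg hy 13, pow_nonneg hy 14, hy]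

/-- the root `x₁²⁰` of `λ₂(x) = λ₀(x)` for `W(n,n+1)` lies strictly between
the two roots `x₁¹² = (3+6n)/(8√(3+9n+9n²))` and `x₂¹² = (9+18n)/(8√(3+9n+9n²))`
of `λ₁(x) = λ₂(x)`. -/
theorem x20_one_between (n : ℕ) (hn : 1 ≤ n) :
    (3 + 6 * (n : ℝ)) / (8 * Real.sqrt (3 + 9 * (n : ℝ) + 9 * (n : ℝ) ^ 2)) <
      ((178 + 1812 * (n : ℝ) + 7101 * (n : ℝ) ^ 2 + 13455 * (n : ℝ) ^ 3 + 12357 * (n : ℝ) ^ 4 +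
            4401 * (n : ℝ) ^ 5) * Real.sqrt (3 + 9 * (n : ℝ) + 9 * (n : ℝ) ^ 2) -
          (13 + 54 * (n : ℝ) + 57 * (n : ℝ) ^ 2) * Real.sqrt 3 *
            Real.sqrt (689 + 7847 * (n : ℝ) + 39387 * (n : ℝ) ^ 2 + 113562 * (n : ℝ) ^ 3 +
              205110 * (n : ℝ) ^ 4 + 236718 * (n : ℝ) ^ 5 + 169641 * (n : ℝ) ^ 6 +
              68607 * (n : ℝ) ^ 7 + 11907 * (n : ℝ) ^ 8)) /
        (8 * (-131 - 969 * (n : ℝ) - 2835 * (n : ℝ) ^ 2 - 3870 * (n : ℝ) ^ 3 -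
          1809 * (n : ℝ) ^ 4 + 999 * (n : ℝ) ^ 5 + 999 * (n : ℝ) ^ 6)) ∧
    ((178 + 1812 * (n : ℝ) + 7101 * (n : ℝ) ^ 2 + 13455 * (n : ℝ) ^ 3 + 12357 * (n : ℝ) ^ 4 +
          4401 * (n : ℝ) ^ 5) * Real.sqrt (3 + 9 * (n : ℝ) + 9 * (n : ℝ) ^ 2) -
        (13 + 54 * (n : ℝ) + 57 * (n : ℝ) ^ 2) * Real.sqrt 3 *
          Real.sqrt (689 + 7847 * (n : ℝ) + 39387 * (n : ℝ) ^ 2 + 113562 * (n : ℝ) ^ 3 +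
            205110 * (n : ℝ) ^ 4 + 236718 * (n : ℝ) ^ 5 + 169641 * (n : ℝ) ^ 6 +
            68607 * (n : ℝ) ^ 7 + 11907 * (n : ℝ) ^ 8)) /
      (8 * (-131 - 969 * (n : ℝ) - 2835 * (n : ℝ) ^ 2 - 3870 * (n : ℝ) ^ 3 -
        1809 * (n : ℝ) ^ 4 + 999 * (n : ℝ) ^ 5 + 999 * (n : ℝ) ^ 6)) <
      (9 + 18 * (n : ℝ)) / (8 * Real.sqrt (3 + 9 * (n : ℝ) + 9 * (n : ℝ) ^ 2)) := by
  have hx0 : (0:ℝ) ≤ (n : ℝ) := Nat.cast_nonneg n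
  have hP : (0:ℝ) < 3 + 9 * (n : ℝ) + 9 * (n : ℝ) ^ 2 := by positivity
  have hR : (0:ℝ) ≤ 689 + 7847 * (n : ℝ) + 39387 * (n : ℝ) ^ 2 + 113562 * (n : ℝ) ^ 3 +
      205110 * (n : ℝ) ^ 4 + 236718 * (n : ℝ) ^ 5 + 169641 * (n : ℝ) ^ 6 +
      68607 * (n : ℝ) ^ 7 + 11907 * (n : ℝ) ^ 8 := by positivity
  set s : ℝ := Real.sqrt (3 + 9 * (n : ℝ) + 9 * (n : ℝ) ^ 2) with hs_def
  set t : ℝ := Real.sqrt 3 with ht_def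
  set r : ℝ := Real.sqrt (689 + 7847 * (n : ℝ) + 39387 * (n : ℝ) ^ 2 + 113562 * (n : ℝ) ^ 3 +
      205110 * (n : ℝ) ^ 4 + 236718 * (n : ℝ) ^ 5 + 169641 * (n : ℝ) ^ 6 +
      68607 * (n : ℝ) ^ 7 + 11907 * (n : ℝ) ^ 8) with hr_def
  have hs : 0 < s := Real.sqrt_pos.mpr hP
  have hs2 : s ^ 2 = 3 + 9 * (n : ℝ) + 9 * (n : ℝ) ^ 2 := Real.sq_sqrt hP.le
  have ht : 0 ≤ t := Real.sqrt_nonneg 3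
  have ht2 : t ^ 2 = 3 := Real.sq_sqrt (by norm_num)
  have hrr : 0 ≤ r := Real.sqrt_nonneg _
  have hr2 : r ^ 2 = 689 + 7847 * (n : ℝ) + 39387 * (n : ℝ) ^ 2 + 113562 * (n : ℝ) ^ 3 +
      205110 * (n : ℝ) ^ 4 + 236718 * (n : ℝ) ^ 5 + 169641 * (n : ℝ) ^ 6 +
      68607 * (n : ℝ) ^ 7 + 11907 * (n : ℝ) ^ 8 := Real.sq_sqrt hR
  have hw2 : (t * r * s) ^ 2 = 3 * (689 + 7847 * (n : ℝ) + 39387 * (n : ℝ) ^ 2 +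
      113562 * (n : ℝ) ^ 3 + 205110 * (n : ℝ) ^ 4 + 236718 * (n : ℝ) ^ 5 +
      169641 * (n : ℝ) ^ 6 + 68607 * (n : ℝ) ^ 7 + 11907 * (n : ℝ) ^ 8) *
      (3 + 9 * (n : ℝ) + 9 * (n : ℝ) ^ 2) := by
    have : (t * r * s) ^ 2 = t ^ 2 * r ^ 2 * s ^ 2 := by ring
    rw [this, ht2, hr2, hs2]
  have hw0 : 0 ≤ t * r * s := by positivity
  rcases eq_or_lt_of_le hn with h1 | h2
  · -- n = 1
    subst h1
    push_cast at hs2 hr2 hw2 ⊢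
    norm_num at hs2 hr2 hw2 ⊢
    have hlb : 7210 < t * r * s := by nlinarith [hw2, hw0]
    have hub : t * r * s < 7333 := by nlinarith [hw2, hw0]
    constructor
    · refine aux_div_lt_neg (by positivity) (by norm_num) ?_
      nlinarith [hs2, hlb]
    · refine aux_neg_lt_div (by positivity) (by norm_num) ?_
      nlinarith [hs2, hub]
  · -- n ≥ 2
    have hx2 : (2:ℝ) ≤ (n : ℝ) := by exact_mod_cast h2
    have hq : (0:ℝ) < -131 - 969 * (n : ℝ) - 2835 * (n : ℝ) ^ 2 - 3870 * (n : ℝ) ^ 3 -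
        1809 * (n : ℝ) ^ 4 + 999 * (n : ℝ) ^ 5 + 999 * (n : ℝ) ^ 6 := aux_q_pos _ hx2
    have hS1 := aux_S1_pos (n : ℝ) hx0
    have hBv : (13 + 54 * (n : ℝ) + 57 * (n : ℝ) ^ 2) * (t * r * s) <
        (178 + 1812 * (n : ℝ) + 7101 * (n : ℝ) ^ 2 + 13455 * (n : ℝ) ^ 3 +
          12357 * (n : ℝ) ^ 4 + 4401 * (n : ℝ) ^ 5) * (3 + 9 * (n : ℝ) + 9 * (n : ℝ) ^ 2) -
        (3 + 6 * (n : ℝ)) * (-131 - 969 * (n : ℝ) - 2835 * (n : ℝ) ^ 2 - 3870 * (n : ℝ) ^ 3 -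
          1809 * (n : ℝ) ^ 4 + 999 * (n : ℝ) ^ 5 + 999 * (n : ℝ) ^ 6) := by
      refine lt_of_pow_lt_pow_left₀ 2 hS1.le ?_
      have e : ((13 + 54 * (n : ℝ) + 57 * (n : ℝ) ^ 2) * (t * r * s)) ^ 2 =
          (13 + 54 * (n : ℝ) + 57 * (n : ℝ) ^ 2) ^ 2 * ((t * r * s) ^ 2) := by ring
      rw [e, hw2]
      have := aux_D1 (n : ℝ) hx2
      linarith
    have hBv2 : (178 + 1812 * (n : ℝ) + 7101 * (n : ℝ) ^ 2 + 13455 * (n : ℝ) ^ 3 +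
          12357 * (n : ℝ) ^ 4 + 4401 * (n : ℝ) ^ 5) * (3 + 9 * (n : ℝ) + 9 * (n : ℝ) ^ 2) -
        (9 + 18 * (n : ℝ)) * (-131 - 969 * (n : ℝ) - 2835 * (n : ℝ) ^ 2 - 3870 * (n : ℝ) ^ 3 -
          1809 * (n : ℝ) ^ 4 + 999 * (n : ℝ) ^ 5 + 999 * (n : ℝ) ^ 6) <
        (13 + 54 * (n : ℝ) + 57 * (n : ℝ) ^ 2) * (t * r * s) := by
      refine lt_of_pow_lt_pow_left₀ 2 (by positivity) ?_
      have e : ((13 + 54 * (n : ℝ) + 57 * (n : ℝ) ^ 2) * (t * r * s)) ^ 2 =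
          (13 + 54 * (n : ℝ) + 57 * (n : ℝ) ^ 2) ^ 2 * ((t * r * s) ^ 2) := by ring
      rw [e, hw2]
      have := aux_D2 (n : ℝ) hx2
      linarith
    have hAs : (178 + 1812 * (n : ℝ) + 7101 * (n : ℝ) ^ 2 + 13455 * (n : ℝ) ^ 3 +
        12357 * (n : ℝ) ^ 4 + 4401 * (n : ℝ) ^ 5) * s ^ 2 =
        (178 + 1812 * (n : ℝ) + 7101 * (n : ℝ) ^ 2 + 13455 * (n : ℝ) ^ 3 +
        12357 * (n : ℝ) ^ 4 + 4401 * (n : ℝ) ^ 5) * (3 + 9 * (n : ℝ) + 9 * (n : ℝ) ^ 2) := by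
      rw [hs2]
    constructor
    · rw [div_lt_div_iff₀ (by positivity) (by linarith : (0:ℝ) < 8 * (-131 - 969 * (n : ℝ) -
        2835 * (n : ℝ) ^ 2 - 3870 * (n : ℝ) ^ 3 - 1809 * (n : ℝ) ^ 4 + 999 * (n : ℝ) ^ 5 +
        999 * (n : ℝ) ^ 6))]
      linarith [hAs, hBv]
    · rw [div_lt_div_iff₀ (by linarith : (0:ℝ) < 8 * (-131 - 969 * (n : ℝ) -
        2835 * (n : ℝ) ^ 2 - 3870 * (n : ℝ) ^ 3 - 1809 * (n : ℝ) ^ 4 + 999 * (n : ℝ) ^ 5 +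
        999 * (n : ℝ) ^ 6)) (by positivity)]
      linarith [hAs, hBv2]
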